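/- Let 𝒜 be a noetherian abelian category and Z a weak stability function on 𝒜 such that the image of the generalized rank R = Im ∘ Z (over all objects of 𝒜) is a discrete subset of ℝ. Then every nonzero object E of 𝒜 admits a Harder–Narasimhan filtration: a finite chain of subobjects 0 = E₀ ⊊ E₁ ⊊ … ⊊ Eₙ = E such that each subquotient A_i = E_i/E_{i−1} is Z-semistable and μ(A₁) > μ(A₂) > … > μ(Aₙ). -/

import Mathlib

open CategoryTheory CategoryTheory.Limits

namespace BridgelandNotes

variable {𝒜 : Type*} [Category 𝒜] [Abelian 𝒜]

/-- `Z` is additive on short exact sequences: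
`Z(E) = Z(F) + Z(G)` whenever `0 → F → E → G → 0` is exact in `𝒜`. -/
def AdditiveOnSES (Z : 𝒜 → ℂ) : Prop :=
  ∀ S : ShortComplex 𝒜, S.ShortExact → Z S.X₂ = Z S.X₁ + Z S.X₃

/-- `Z` is a stability function on the abelian category `𝒜`: it is additive on short
exact sequences, every nonzero object satisfies `Im Z(E) ≥ 0`, and `Im Z(E) = 0`
implies `Re Z(E) < 0`. -/
def IsStabilityFunction (Z : 𝒜 → ℂ) : Prop :=
  AdditiveOnSES Z ∧
    ∀ E : 𝒜, ¬ IsZero E → 0 ≤ (Z E).im ∧ ((Z E).im = 0 → (Z E).re < 0)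

/-- The generalized rank `R(E) := Im Z(E)`. -/
def genR (Z : 𝒜 → ℂ) (E : 𝒜) : ℝ := (Z E).im

/-- The generalized degree `D(E) := -Re Z(E)`. -/
def genD (Z : 𝒜 → ℂ) (E : 𝒜) : ℝ := -(Z E).re

/-- The slope inequality `μ(A) ≤ μ(B)`, encoded for nonzero objects by
cross-multiplication: `D(A)·R(B) ≤ D(B)·R(A)`. -/
def SlopeLE (Z : 𝒜 → ℂ) (A B : 𝒜) : Prop :=
  genD Z A * genR Z B ≤ genD Z B * genR Z A

/-- The strict slope inequality `μ(A) < μ(B)`, encoded for nonzero objects by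
cross-multiplication: `D(A)·R(B) < D(B)·R(A)`. -/
def SlopeLT (Z : 𝒜 → ℂ) (A B : 𝒜) : Prop :=
  genD Z A * genR Z B < genD Z B * genR Z A

/-- A nonzero object `E` is `Z`-semistable if `μ(F) ≤ μ(E)` for every nonzero proper
subobject `F` of `E`. -/
def IsSemistable (Z : 𝒜 → ℂ) (E : 𝒜) : Prop :=
  ¬ IsZero E ∧
    ∀ (F : 𝒜) (f : F ⟶ E), Mono f → ¬ IsZero F → ¬ IsIso f → SlopeLE Z F E

/-- The abelian category `𝒜` is noetherian: every ascending chain of subobjects of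
any object stabilizes. -/
def NoetherianCategory (𝒜 : Type*) [Category 𝒜] [Abelian 𝒜] : Prop :=
  ∀ (E : 𝒜) (f : ℕ →o Subobject E), ∃ N : ℕ, ∀ n : ℕ, N ≤ n → f n = f N

/-- The image of the generalized rank `R = Im ∘ Z` is a discrete subset of `ℝ`. -/
def HasDiscreteRank (Z : 𝒜 → ℂ) : Prop :=
  ∀ x ∈ Set.range (genR Z), ∃ ε > (0 : ℝ), ∀ y ∈ Set.range (genR Z), |y - x| < ε → y = x

/-- The subquotient `T/S` of two nested subobjects `S ≤ T` of an object of `𝒜`. -/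
noncomputable def subquot {E : 𝒜} (S T : Subobject E) (h : S ≤ T) : 𝒜 :=
  cokernel (Subobject.ofLE S T h)

/-- `Z` is a weak stability function on the abelian category `𝒜`: it is additive on
short exact sequences, every nonzero object satisfies `Im Z(E) ≥ 0`, and
`Im Z(E) = 0` implies `Re Z(E) ≤ 0`. -/
def IsWeakStabilityFunction (Z : 𝒜 → ℂ) : Prop :=
  AdditiveOnSES Z ∧
    ∀ E : 𝒜, ¬ IsZero E → 0 ≤ (Z E).im ∧ ((Z E).im = 0 → (Z E).re ≤ 0)

/-- The slope `μ(E) = D(E)/R(E) ∈ (−∞, +∞]`, with the convention `μ(E) = +∞`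
whenever `R(E) = 0`. -/
noncomputable def slopeE (Z : 𝒜 → ℂ) (E : 𝒜) : EReal :=
  if genR Z E = 0 then ⊤ else ((genD Z E / genR Z E : ℝ) : EReal)

/-- A nonzero object `E` is `Z`-semistable if `μ(F) ≤ μ(E)` for every nonzero proper
subobject `F` of `E`. -/
def IsSemistableWeak (Z : 𝒜 → ℂ) (E : 𝒜) : Prop :=
  ¬ IsZero E ∧
    ∀ (F : 𝒜) (f : F ⟶ E), Mono f → ¬ IsZero F → ¬ IsIso f → slopeE Z F ≤ slopeE Z E

/-! ### Auxiliary machinery for the proof of `hn_filtration_exists_weak` -/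

namespace HNAux

open ZeroObject

/-- slope of a complex number, as in `slopeE`. -/
noncomputable def m (c : ℂ) : EReal :=
  if c.im = 0 then (⊤ : EReal) else ((-c.re / c.im : ℝ) : EReal)

/-- the constraint satisfied by `Z` of any object. -/
def Pc (c : ℂ) : Prop := 0 ≤ c.im ∧ (c.im = 0 → c.re ≤ 0)

lemma m_of_im_ne {c : ℂ} (h : c.im ≠ 0) : m c = ((-c.re / c.im : ℝ) : EReal) := if_neg h

lemma m_of_im_eq {c : ℂ} (h : c.im = 0) : m c = ⊤ := if_pos h

lemma Pc.im_cases {c : ℂ} (h : Pc c) : c.im = 0 ∨ 0 < c.im := by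
  rcases eq_or_lt_of_le h.1 with h' | h'
  · exact Or.inl h'.symm
  · exact Or.inr h'

/-- adding a rank-zero, nonpositive-degree piece can only raise the slope. -/
lemma m_le_m_add_of_im_eq {a b : ℂ} (ha : Pc a) (hb0 : b.im = 0) (hbre : b.re ≤ 0) :
    m a ≤ m (a + b) := by
  rcases ha.im_cases with h | h
  · rw [m_of_im_eq (show (a+b).im = 0 by simp [Complex.add_im, h, hb0])]; exact le_top
  · have him : (a + b).im = a.im := by simp [Complex.add_im, hb0]
    rw [m_of_im_ne h.ne', m_of_im_ne (by rw [him]; exact h.ne'), EReal.coe_le_coe_iff, him,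
      div_le_div_iff₀ h h]
    simp only [Complex.add_re]
    nlinarith

/-- strict seesaw. -/
lemma m_lt_of_m_add_lt {a b : ℂ} (ha : Pc a) (hb : Pc b) (h : m (a + b) < m a) :
    m b < m a := by
  rcases hb.im_cases with hb0 | hbpos
  · exact absurd h (not_lt_of_ge (m_le_m_add_of_im_eq ha hb0 (hb.2 hb0)))
  · rcases ha.im_cases with ha0 | hapos
    · rw [m_of_im_eq ha0, m_of_im_ne hbpos.ne']
      exact lt_top_iff_ne_top.mpr (EReal.coe_ne_top _)
    · have hsum : 0 < (a + b).im := by rw [Complex.add_im]; positivity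
      rw [m_of_im_ne hsum.ne', m_of_im_ne hapos.ne', EReal.coe_lt_coe_iff] at h
      rw [m_of_im_ne hbpos.ne', m_of_im_ne hapos.ne', EReal.coe_lt_coe_iff]
      rw [div_lt_div_iff₀ hsum hapos] at h
      rw [div_lt_div_iff₀ hbpos hapos]
      simp only [Complex.add_re, Complex.add_im] at h
      nlinarith

/-- strictly smaller slope pulls the sum strictly down. -/
lemma m_add_lt_of_lt {a b : ℂ} (ha : Pc a) (hb : Pc b) (h : m b < m a) :
    m (a + b) < m a := by
  have hbpos : 0 < b.im := by
    rcases hb.im_cases with hb0 | hbpos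
    · rw [m_of_im_eq hb0] at h; exact absurd h (by simp)
    · exact hbpos
  have hsum : 0 < (a + b).im := by
    have := ha.1; rw [Complex.add_im]; positivity
  rcases ha.im_cases with ha0 | hapos
  · rw [m_of_im_eq ha0, m_of_im_ne hsum.ne']
    exact lt_top_iff_ne_top.mpr (EReal.coe_ne_top _)
  · rw [m_of_im_ne hbpos.ne', m_of_im_ne hapos.ne', EReal.coe_lt_coe_iff,
      div_lt_div_iff₀ hbpos hapos] at h
    rw [m_of_im_ne hsum.ne', m_of_im_ne hapos.ne', EReal.coe_lt_coe_iff,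
      div_lt_div_iff₀ hsum hapos]
    simp only [Complex.add_re, Complex.add_im]
    nlinarith

/-- the slope of a sum is at most the max of the slopes. -/
lemma m_add_le_max {a b : ℂ} (ha : Pc a) (hb : Pc b) :
    m (a + b) ≤ max (m a) (m b) := by
  rcases ha.im_cases with ha0 | hapos
  · rw [m_of_im_eq ha0]; exact le_trans le_top (le_max_left _ _)
  · rcases hb.im_cases with hb0 | hbpos
    · rw [m_of_im_eq hb0]; exact le_trans le_top (le_max_right _ _)
    · have hsum : 0 < (a + b).im := by rw [Complex.add_im]; positivity
      rw [m_of_im_ne hsum.ne', m_of_im_ne hapos.ne', m_of_im_ne hbpos.ne']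
      rcases le_total ((-b.re) * a.im) ((-a.re) * b.im) with hc | hc
      · refine le_trans ?_ (le_max_left _ _)
        rw [EReal.coe_le_coe_iff, div_le_div_iff₀ hsum hapos]
        simp only [Complex.add_re, Complex.add_im]
        nlinarith
      · refine le_trans ?_ (le_max_right _ _)
        rw [EReal.coe_le_coe_iff, div_le_div_iff₀ hsum hbpos]
        simp only [Complex.add_re, Complex.add_im]
        nlinarith

/-- combination lemma. -/
lemma m_add_lt_of_le_of_lt {a b : ℂ} {c : EReal} (ha : Pc a) (hb : Pc b)
    (h1 : m a ≤ c) (h2 : m b < c) : m (a + b) < c := by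
  rcases le_or_gt (m a) (m b) with h | h
  · exact lt_of_le_of_lt ((m_add_le_max ha hb).trans (max_le h le_rfl)) h2
  · exact lt_of_lt_of_le (m_add_lt_of_lt ha hb h) h1

section Cat

variable {𝒜 : Type*} [Category 𝒜] [Abelian 𝒜]

lemma Z_zero_of_isZero {Z : 𝒜 → ℂ} (hZ : AdditiveOnSES Z) {W : 𝒜} (hW : IsZero W) : Z W = 0 := by
  have h : (ShortComplex.mk (𝟙 W) (𝟙 W) (hW.eq_of_src _ _)).ShortExact :=
    ⟨ShortComplex.exact_of_isZero_X₂ _ hW⟩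
  exact left_eq_add.mp (hZ _ h)

lemma Z_add_of_ses {Z : 𝒜 → ℂ} (hZ : AdditiveOnSES Z) {A B C : 𝒜} (f : A ⟶ B) (g : B ⟶ C)
    [Mono f] [Epi g] (w : f ≫ g = 0) (h : IsLimit (KernelFork.ofι f w)) :
    Z B = Z A + Z C :=
  hZ (ShortComplex.mk f g w) ⟨ShortComplex.exact_of_f_is_kernel _ h⟩

lemma Z_iso {Z : 𝒜 → ℂ} (hZ : AdditiveOnSES Z) {X Y : 𝒜} (e : X ≅ Y) : Z X = Z Y := by
  have hm : Mono (0 : (0 : 𝒜) ⟶ X) := ⟨fun u v _ => (isZero_zero 𝒜).eq_of_tgt u v⟩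
  have hlim : IsLimit (KernelFork.ofι (0 : (0 : 𝒜) ⟶ X) (zero_comp (f := e.hom))) := by
    refine KernelFork.IsLimit.ofι _ _ (fun g' _ => 0) (fun g' hg' => ?_) (fun g' hg' mm _ => ?_)
    · have h0 : g' = 0 := by
        rw [← Category.comp_id g', ← e.hom_inv_id, ← Category.assoc, hg', zero_comp]
      simp [h0]
    · exact (isZero_zero 𝒜).eq_of_tgt mm 0
  have := Z_add_of_ses hZ (0 : (0 : 𝒜) ⟶ X) e.hom (by simp) hlim
  rw [this, Z_zero_of_isZero hZ (isZero_zero 𝒜), zero_add]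

lemma Z_subquot {Z : 𝒜 → ℂ} (hZ : AdditiveOnSES Z) {E : 𝒜} (S T : Subobject E) (h : S ≤ T) :
    Z ((T : 𝒜)) = Z ((S : 𝒜)) + Z (subquot S T h) := by
  have := Z_add_of_ses hZ (Subobject.ofLE S T h) (cokernel.π _) (cokernel.condition _)
    (Abelian.monoIsKernelOfCokernel
      (CokernelCofork.ofπ _ (cokernel.condition (Subobject.ofLE S T h))) (cokernelIsCokernel _))
  exact this

lemma isZero_of_bot_eq_top {E : 𝒜} (h : (⊥ : Subobject E) = ⊤) : IsZero E := by
  have h2 : Subobject.mk ((⊥ : Subobject E).arrow) = ⊤ := by rw [Subobject.mk_arrow, h]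
  have : IsIso ((⊥ : Subobject E).arrow) := (Subobject.isIso_iff_mk_eq_top _).mpr h2
  have harr : (⊥ : Subobject E).arrow = 0 := Subobject.bot_arrow
  rw [harr] at this
  rw [IsZero.iff_id_eq_zero]
  calc 𝟙 E = inv (0 : ((⊥ : Subobject E) : 𝒜) ⟶ E) ≫ (0 : ((⊥ : Subobject E) : 𝒜) ⟶ E) :=
        (IsIso.inv_hom_id _).symm
  _ = 0 := comp_zero

/-- If the subquotient `T/S` is zero then `S = T`. -/
lemma eq_of_isZero_subquot {E : 𝒜} {S T : Subobject E} (h : S ≤ T)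
    (hz : IsZero (subquot S T h)) : S = T := by
  have hepi : Epi (Subobject.ofLE S T h) := by
    rw [Preadditive.epi_iff_cancel_zero]
    intro W g hg
    have : cokernel.desc _ g hg = 0 := hz.eq_of_src _ _
    rw [← cokernel.π_desc (Subobject.ofLE S T h) g hg, this, comp_zero]
  have : IsIso (Subobject.ofLE S T h) := isIso_of_mono_of_epi _
  refine le_antisymm h (Subobject.le_of_comm (inv (Subobject.ofLE S T h)) ?_)
  rw [IsIso.inv_comp_eq, Subobject.ofLE_arrow]

/-- The transfer lemma: a subobject of `T/S` comes from some `Q` with `S ≤ Q ≤ T`. -/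
lemma transfer {Z : 𝒜 → ℂ} (hZ : AdditiveOnSES Z) {E : 𝒜} {S T : Subobject E} (h : S ≤ T)
    {F : 𝒜} (f : F ⟶ subquot S T h) (hf : Mono f) :
    ∃ Q : Subobject E, S ≤ Q ∧ Q ≤ T ∧ Z F = Z ((Q : 𝒜)) - Z ((S : 𝒜)) ∧
      (S = Q → IsZero F) ∧ (Q = T → IsIso f) := by
  set π : ((T : 𝒜)) ⟶ subquot S T h := cokernel.π (Subobject.ofLE S T h) with hπdef
  have hπ : Epi π := by rw [hπdef]; exact (inferInstance : Epi (cokernel.π (Subobject.ofLE S T h)))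
  have hfst : Epi (pullback.fst f π) := Abelian.epi_pullback_of_epi_g f π
  have hsnd : Mono (pullback.snd f π) := inferInstance
  have hmkm : Mono (pullback.snd f π ≫ T.arrow) := mono_comp _ _
  have hℓw : (0 : ((S : 𝒜)) ⟶ F) ≫ f = Subobject.ofLE S T h ≫ π := by
    rw [zero_comp, hπdef]; exact (cokernel.condition _).symm
  set ℓ : ((S : 𝒜)) ⟶ pullback f π := pullback.lift 0 (Subobject.ofLE S T h) hℓw with hℓdef
  have hℓfst : ℓ ≫ pullback.fst f π = 0 := pullback.lift_fst _ _ _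
  have hℓsnd : ℓ ≫ pullback.snd f π = Subobject.ofLE S T h := pullback.lift_snd _ _ _
  have hℓmono : Mono ℓ := by
    have : Mono (ℓ ≫ pullback.snd f π) := by rw [hℓsnd]; infer_instance
    exact mono_of_mono ℓ (pullback.snd f π)
  have hℓcomm : ℓ ≫ (pullback.snd f π ≫ T.arrow) = S.arrow := by
    rw [← Category.assoc, hℓsnd, Subobject.ofLE_arrow]
  have hlim : IsLimit (KernelFork.ofι ℓ hℓfst) := by
    refine KernelFork.IsLimit.ofι' ℓ hℓfst (fun {W} k hk => ?_)
    have hkp : (k ≫ pullback.snd f π) ≫ π = 0 := by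
      rw [Category.assoc, ← pullback.condition, ← Category.assoc, hk, zero_comp]
    refine ⟨Abelian.monoLift (Subobject.ofLE S T h) (k ≫ pullback.snd f π) hkp, ?_⟩
    apply pullback.hom_ext
    · rw [Category.assoc, hℓfst, comp_zero, hk]
    · rw [Category.assoc, hℓsnd]; exact Abelian.monoLift_comp _ _ _
  refine ⟨Subobject.mk (pullback.snd f π ≫ T.arrow),
    Subobject.le_mk_of_comm ℓ hℓcomm, Subobject.mk_le_of_comm (pullback.snd f π) rfl, ?_, ?_, ?_⟩
  · have h1 : Z (pullback f π) = Z ((S : 𝒜)) + Z F :=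
      Z_add_of_ses hZ ℓ (pullback.fst f π) hℓfst hlim
    have h2 : Z ((Subobject.mk (pullback.snd f π ≫ T.arrow) : 𝒜)) = Z (pullback f π) :=
      Z_iso hZ (Subobject.underlyingIso _)
    rw [h2, h1]; ring
  · intro hsq
    have hmm : Subobject.mk S.arrow = Subobject.mk (pullback.snd f π ≫ T.arrow) := by
      rw [Subobject.mk_arrow]; exact hsq
    have hinv : Subobject.ofMkLEMk S.arrow (pullback.snd f π ≫ T.arrow) hmm.le ≫
        (pullback.snd f π ≫ T.arrow) = S.arrow := Subobject.ofMkLEMk_comp _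
    have hℓeq : ℓ = (Subobject.isoOfMkEqMk S.arrow (pullback.snd f π ≫ T.arrow) hmm).hom := by
      rw [← cancel_mono (pullback.snd f π ≫ T.arrow), hℓcomm, Subobject.isoOfMkEqMk_hom, hinv]
    have hiso : IsIso ℓ := by rw [hℓeq]; infer_instance
    have hfst0 : pullback.fst f π = 0 := by
      rw [← Category.id_comp (pullback.fst f π), ← IsIso.inv_hom_id ℓ, Category.assoc, hℓfst,
        comp_zero]
    rw [IsZero.iff_id_eq_zero, ← cancel_epi (pullback.fst f π), hfst0, zero_comp, comp_zero]
  · intro hqt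
    have hmm : Subobject.mk (pullback.snd f π ≫ T.arrow) = Subobject.mk T.arrow := by
      rw [Subobject.mk_arrow]; exact hqt
    have hcomm : Subobject.ofMkLEMk (pullback.snd f π ≫ T.arrow) T.arrow hmm.le ≫ T.arrow =
        pullback.snd f π ≫ T.arrow := Subobject.ofMkLEMk_comp _
    have hsndeq : (Subobject.isoOfMkEqMk (pullback.snd f π ≫ T.arrow) T.arrow hmm).hom =
        pullback.snd f π := by rw [← cancel_mono T.arrow, Subobject.isoOfMkEqMk_hom, hcomm]
    have hsndiso : IsIso (pullback.snd f π) := by rw [← hsndeq]; infer_instance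
    have : Epi (pullback.fst f π ≫ f) := by rw [pullback.condition]; exact epi_comp _ _
    have : Epi f := epi_of_epi (pullback.fst f π) f
    exact isIso_of_mono_of_epi f

lemma Z_modular {Z : 𝒜 → ℂ} (hZ : AdditiveOnSES Z) {E : 𝒜} (A B : Subobject E) :
    Z ((A : 𝒜)) + Z ((B : 𝒜)) =
      Z (((A ⊔ B : Subobject E) : 𝒜)) + Z (((A ⊓ B : Subobject E) : 𝒜)) := by
  set i : ((A : 𝒜)) ⟶ ((A ⊔ B : Subobject E) : 𝒜) := Subobject.ofLE A (A ⊔ B) le_sup_left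
    with hidef
  set j : ((B : 𝒜)) ⟶ ((A ⊔ B : Subobject E) : 𝒜) := Subobject.ofLE B (A ⊔ B) le_sup_right
    with hjdef
  set ψ : ((B : 𝒜)) ⟶ cokernel i := j ≫ cokernel.π i with hψdef
  have hψepi : Epi ψ := by
    rw [Preadditive.epi_iff_cancel_zero]
    intro W g hg
    have hA : i ≫ (cokernel.π i ≫ g) = 0 := by rw [← Category.assoc, cokernel.condition, zero_comp]
    have hB : j ≫ (cokernel.π i ≫ g) = 0 := by rw [← Category.assoc, ← hψdef]; exact hg
    have hAK : A ≤ Subobject.mk (kernel.ι (cokernel.π i ≫ g) ≫ (A ⊔ B).arrow) := by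
      refine Subobject.le_mk_of_comm (kernel.lift _ i hA) ?_
      rw [← Category.assoc, kernel.lift_ι, hidef, Subobject.ofLE_arrow]
    have hBK : B ≤ Subobject.mk (kernel.ι (cokernel.π i ≫ g) ≫ (A ⊔ B).arrow) := by
      refine Subobject.le_mk_of_comm (kernel.lift _ j hB) ?_
      rw [← Category.assoc, kernel.lift_ι, hjdef, Subobject.ofLE_arrow]
    have hmm : Subobject.mk (kernel.ι (cokernel.π i ≫ g) ≫ (A ⊔ B).arrow) =
        Subobject.mk (A ⊔ B).arrow := by
      rw [Subobject.mk_arrow]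
      exact le_antisymm (Subobject.mk_le_of_comm (kernel.ι _) rfl) (sup_le hAK hBK)
    have hcomm : (Subobject.isoOfMkEqMk _ _ hmm).hom ≫ (A ⊔ B).arrow =
        kernel.ι (cokernel.π i ≫ g) ≫ (A ⊔ B).arrow := by
      rw [Subobject.isoOfMkEqMk_hom, Subobject.ofMkLEMk_comp]
    have hιeq : (Subobject.isoOfMkEqMk _ _ hmm).hom = kernel.ι (cokernel.π i ≫ g) := by
      rw [← cancel_mono (A ⊔ B).arrow, hcomm]
    have hιiso : IsIso (kernel.ι (cokernel.π i ≫ g)) := by rw [← hιeq]; infer_instance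
    have hker0 : cokernel.π i ≫ g = 0 := by
      rw [← cancel_epi (kernel.ι (cokernel.π i ≫ g)), kernel.condition, comp_zero]
    rw [← cancel_epi (cokernel.π i), hker0, comp_zero]
  have hw : Subobject.ofLE (A ⊓ B) B inf_le_right ≫ ψ = 0 := by
    rw [hψdef, ← Category.assoc, hjdef, Subobject.ofLE_comp_ofLE, ←
      Subobject.ofLE_comp_ofLE (A ⊓ B) A (A ⊔ B) inf_le_left le_sup_left, ← hidef,
      Category.assoc, cokernel.condition, comp_zero]
  have hlim : IsLimit (KernelFork.ofι (Subobject.ofLE (A ⊓ B) B inf_le_right) hw) := by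
    refine KernelFork.IsLimit.ofι' _ hw (fun {W} k hk => ?_)
    have hkp : (k ≫ j) ≫ cokernel.π i = 0 := by
      rw [Category.assoc, ← hψdef]; exact hk
    have hu := Abelian.monoLift_comp i (k ≫ j) hkp
    have hfacB : B.Factors (k ≫ B.arrow) := Subobject.factors_comp_arrow k
    have heq : k ≫ B.arrow = Abelian.monoLift i (k ≫ j) hkp ≫ A.arrow := by
      rw [← Subobject.ofLE_arrow (le_sup_left : A ≤ A ⊔ B), ← hidef, ← Category.assoc, hu,
        Category.assoc, hjdef, Subobject.ofLE_arrow]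
    have hfacA : A.Factors (k ≫ B.arrow) := by
      rw [heq]; exact Subobject.factors_comp_arrow _
    have hfac : (A ⊓ B).Factors (k ≫ B.arrow) := (Subobject.inf_factors _).mpr ⟨hfacA, hfacB⟩
    refine ⟨Subobject.factorThru _ _ hfac, ?_⟩
    rw [← cancel_mono B.arrow, Category.assoc, Subobject.ofLE_arrow,
      Subobject.factorThru_arrow]
  have h1 : Z ((B : 𝒜)) = Z (((A ⊓ B : Subobject E) : 𝒜)) + Z (cokernel i) :=
    Z_add_of_ses hZ _ ψ hw hlim
  have h2 : Z (((A ⊔ B : Subobject E) : 𝒜)) = Z ((A : 𝒜)) + Z (cokernel i) := by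
    have := Z_subquot hZ A (A ⊔ B) le_sup_left
    rw [this]; rfl
  rw [h1, h2]; ring

end Cat

end HNAux

namespace HNAux

section Comb

variable {𝒜 : Type*} [Category 𝒜] [Abelian 𝒜]

/-- The relative central charge of a pair of subobjects. -/
noncomputable def relz (Z : 𝒜 → ℂ) {E : 𝒜} (S T : Subobject E) : ℂ :=
  Z ((T : 𝒜)) - Z ((S : 𝒜))

lemma relz_eq {Z : 𝒜 → ℂ} (hZ : AdditiveOnSES Z) {E : 𝒜} {S T : Subobject E} (h : S ≤ T) :
    Z (subquot S T h) = relz Z S T := by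
  have := Z_subquot hZ S T h
  unfold relz
  rw [this]; ring

lemma Pc_relz {Z : 𝒜 → ℂ} (hZ : AdditiveOnSES Z) (hPall : ∀ W : 𝒜, Pc (Z W)) {E : 𝒜}
    {S T : Subobject E} (h : S ≤ T) : Pc (relz Z S T) := by
  rw [← relz_eq hZ h]; exact hPall _

lemma relz_add {Z : 𝒜 → ℂ} {E : 𝒜} (S Q T : Subobject E) :
    relz Z S Q + relz Z Q T = relz Z S T := by
  unfold relz; ring

/-- Existence of a "good semistable refinement": the key step. -/
lemma exists_good_ss {Z : 𝒜 → ℂ} {E : 𝒜} (hZ : AdditiveOnSES Z) (hPall : ∀ W : 𝒜, Pc (Z W))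
    (wf : WellFounded ((· > ·) : Subobject E → Subobject E → Prop))
    {ε : ℝ} (hεpos : 0 < ε)
    (hgap : ∀ X Y : Subobject E, X ≤ Y → (relz Z X Y).im = 0 ∨ ε ≤ (relz Z X Y).im)
    (S : Subobject E) (A₀ : Subobject E) (hSA₀ : S < A₀)
    (hgood₀ : ∀ B, A₀ < B → m (relz Z S B) < m (relz Z S A₀)) :
    ∃ A, S < A ∧ A ≤ A₀ ∧
      (∀ Q, S < Q → Q < A → m (relz Z S Q) ≤ m (relz Z S A)) ∧
      (∀ B, A < B → m (relz Z S B) < m (relz Z S A)) := by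
  -- the refinement relation
  set rel : Subobject E → Subobject E → Prop :=
    fun X A => S < X ∧ X < A ∧ m (relz Z S A) < m (relz Z S X) with hrel
  haveI : IsIrrefl (Subobject E) rel := ⟨fun a h => lt_irrefl a h.2.1⟩
  haveI : IsTrans (Subobject E) rel :=
    ⟨fun a b c hab hbc => ⟨hab.1, hab.2.1.trans hbc.2.1, hbc.2.2.trans hab.2.2⟩⟩
  haveI : IsStrictOrder (Subobject E) rel := ⟨⟩
  have wfrel : WellFounded rel := by
    rw [RelEmbedding.wellFounded_iff_isEmpty]
    constructor
    intro g
    have hstep : ∀ n : ℕ, rel (g (n + 1)) (g n) := fun n => g.map_rel_iff.mpr (Nat.lt_succ_self n)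
    have hS : ∀ n, S < g n := fun n =>
      Nat.casesOn n (lt_trans (hstep 0).1 (hstep 0).2.1) fun k => (hstep k).1
    have hle : ∀ n, g (n + 1) ≤ g n := fun n => (hstep n).2.1.le
    -- the rank sequence
    set r : ℕ → ℝ := fun n => (Z ((g n : 𝒜))).im with hrdef
    have hrstep : ∀ n, (relz Z (g (n + 1)) (g n)).im = r n - r (n + 1) := fun n => by
      rw [hrdef]; unfold relz; rw [Complex.sub_im]
    have hrlb : ∀ n, (Z ((S : 𝒜))).im ≤ r n := fun n => by
      have := (Pc_relz hZ hPall (hS n).le).1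
      unfold relz at this
      rw [Complex.sub_im] at this
      linarith
    have key : ∃ n, r (n + 1) = r n := by
      by_contra hall
      push_neg at hall
      have hdec : ∀ n, r (n + 1) + ε ≤ r n := by
        intro n
        rcases hgap (g (n + 1)) (g n) (hle n) with h0 | hge
        · rw [hrstep n] at h0
          exact absurd (by linarith : r (n + 1) = r n) (hall n)
        · rw [hrstep n] at hge; linarith
      have hlin : ∀ n : ℕ, r n ≤ r 0 - n * ε := by
        intro n
        induction n with
        | zero => simp
        | succ k ihk =>
          have := hdec k
          push_cast
          linarith
      obtain ⟨n, hn⟩ := exists_nat_gt ((r 0 - (Z ((S : 𝒜))).im) / ε)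
      have h1 := hlin n
      have h2 := hrlb n
      rw [div_lt_iff₀ hεpos] at hn
      linarith
    obtain ⟨n, hn⟩ := key
    -- contradiction with strictly increasing slopes
    have hb0 : (relz Z (g (n + 1)) (g n)).im = 0 := by rw [hrstep n, hn]; ring
    have hbre : (relz Z (g (n + 1)) (g n)).re ≤ 0 :=
      (Pc_relz hZ hPall (hle n)).2 hb0
    have hadd : relz Z S (g (n + 1)) + relz Z (g (n + 1)) (g n) = relz Z S (g n) :=
      relz_add _ _ _
    have hle' : m (relz Z S (g (n + 1))) ≤ m (relz Z S (g n)) := by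
      rw [← hadd]
      exact m_le_m_add_of_im_eq (Pc_relz hZ hPall (hS (n + 1)).le) hb0 hbre
    exact absurd (hstep n).2.2 (not_lt_of_ge hle')
  -- main refinement induction
  refine wfrel.induction (C := fun A₀ => S < A₀ →
      (∀ B, A₀ < B → m (relz Z S B) < m (relz Z S A₀)) →
      ∃ A, S < A ∧ A ≤ A₀ ∧ (∀ Q, S < Q → Q < A → m (relz Z S Q) ≤ m (relz Z S A)) ∧
        (∀ B, A < B → m (relz Z S B) < m (relz Z S A)))
    A₀ ?_ hSA₀ hgood₀
  clear hSA₀ hgood₀ A₀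
  intro A₀ ih hSA₀ hgood₀
  by_cases hss : ∀ Q, S < Q → Q < A₀ → m (relz Z S Q) ≤ m (relz Z S A₀)
  · exact ⟨A₀, hSA₀, le_rfl, hss, hgood₀⟩
  · push_neg at hss
    obtain ⟨Q₀, hSQ₀, hQ₀A, hQ₀⟩ := hss
    obtain ⟨Qs, hQsD, hQsmax⟩ := wf.has_min
      {Q | S < Q ∧ Q < A₀ ∧ m (relz Z S A₀) < m (relz Z S Q)} ⟨Q₀, hSQ₀, hQ₀A, hQ₀⟩
    obtain ⟨hSQs, hQsA, hQsslope⟩ := hQsD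
    have hgoodQ : ∀ B, Qs < B → m (relz Z S B) < m (relz Z S Qs) := by
      intro B hQB
      by_cases hBA : B ≤ A₀
      · rcases eq_or_lt_of_le hBA with rfl | hBA'
        · exact hQsslope
        · have hnot : ¬ m (relz Z S A₀) < m (relz Z S B) := fun hc =>
            hQsmax B ⟨lt_trans hSQs hQB, hBA', hc⟩ hQB
          exact lt_of_le_of_lt (not_lt.mp hnot) hQsslope
      · by_cases hAB : A₀ ≤ B
        · have hABlt : A₀ < B := lt_of_le_of_ne hAB (fun he => hBA (he ▸ le_rfl))
          exact lt_trans (hgood₀ B hABlt) hQsslope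
        · -- incomparable case
          have hAA' : A₀ < A₀ ⊔ B :=
            lt_of_le_of_ne le_sup_left (fun he => hBA (le_sup_right.trans he.symm.le))
          have hsplit : relz Z S B = relz Z S (A₀ ⊓ B) + relz Z A₀ (A₀ ⊔ B) := by
            have hmod := Z_modular hZ A₀ B
            unfold relz
            linear_combination hmod
          have hz2 : m (relz Z A₀ (A₀ ⊔ B)) < m (relz Z S Qs) := by
            have h1 : m (relz Z S (A₀ ⊔ B)) < m (relz Z S A₀) := hgood₀ _ hAA'
            rw [← relz_add S A₀ (A₀ ⊔ B)] at h1
            exact lt_trans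
              (m_lt_of_m_add_lt (Pc_relz hZ hPall hSA₀.le) (Pc_relz hZ hPall le_sup_left) h1)
              hQsslope
          have hQinf : Qs ≤ A₀ ⊓ B := le_inf hQsA.le hQB.le
          have hinfA : A₀ ⊓ B < A₀ :=
            lt_of_le_of_ne inf_le_left (fun he => hAB (by rw [← he]; exact inf_le_right))
          have hw : m (relz Z S (A₀ ⊓ B)) ≤ m (relz Z S Qs) := by
            rcases eq_or_lt_of_le hQinf with he | hlt
            · rw [← he]
            · have hnot : ¬ m (relz Z S A₀) < m (relz Z S (A₀ ⊓ B)) := fun hc =>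
                hQsmax _ ⟨lt_trans hSQs hlt, hinfA, hc⟩ hlt
              exact (not_lt.mp hnot).trans hQsslope.le
          rw [hsplit]
          exact m_add_lt_of_le_of_lt (Pc_relz hZ hPall (hSQs.trans_le hQinf).le)
            (Pc_relz hZ hPall le_sup_left) hw hz2
    obtain ⟨A, h1, h2, h3, h4⟩ := ih Qs ⟨hSQs, hQsA, hQsslope⟩ hSQs hgoodQ
    exact ⟨A, h1, h2.trans hQsA.le, h3, h4⟩

end Comb

end HNAux

namespace HNAux

section Chain

variable {𝒜 : Type*} [Category 𝒜] [Abelian 𝒜]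

/-- Existence of the Harder–Narasimhan chain, at the level of the subobject lattice. -/
lemma exists_chain {Z : 𝒜 → ℂ} {E : 𝒜} (hZ : AdditiveOnSES Z) (hPall : ∀ W : 𝒜, Pc (Z W))
    (wf : WellFounded ((· > ·) : Subobject E → Subobject E → Prop))
    {ε : ℝ} (hεpos : 0 < ε)
    (hgap : ∀ X Y : Subobject E, X ≤ Y → (relz Z X Y).im = 0 ∨ ε ≤ (relz Z X Y).im)
    (S : Subobject E) (hS : S < ⊤) :
    ∃ (n : ℕ) (C : ℕ → Subobject E), 0 < n ∧ C 0 = S ∧ C n = ⊤ ∧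
      (∀ i, i < n → C i < C (i + 1)) ∧
      (∀ i, i < n → ∀ Q, C i < Q → Q < C (i + 1) →
        m (relz Z (C i) Q) ≤ m (relz Z (C i) (C (i + 1)))) ∧
      (∀ i, i < n → ∀ B, C (i + 1) < B →
        m (relz Z (C i) B) < m (relz Z (C i) (C (i + 1)))) := by
  refine wf.induction (C := fun S => S < ⊤ →
      ∃ (n : ℕ) (C : ℕ → Subobject E), 0 < n ∧ C 0 = S ∧ C n = ⊤ ∧
        (∀ i, i < n → C i < C (i + 1)) ∧
        (∀ i, i < n → ∀ Q, C i < Q → Q < C (i + 1) →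
          m (relz Z (C i) Q) ≤ m (relz Z (C i) (C (i + 1)))) ∧
        (∀ i, i < n → ∀ B, C (i + 1) < B →
          m (relz Z (C i) B) < m (relz Z (C i) (C (i + 1)))))
    S ?_ hS
  clear hS S
  intro S ih hS
  obtain ⟨A, hSA, _, hssA, hgoodA⟩ := exists_good_ss hZ hPall wf hεpos hgap S ⊤ hS
    (fun B hB => absurd hB (not_top_lt))
  rcases eq_or_lt_of_le (le_top : A ≤ ⊤) with htop | hAtop
  · -- single step chain
    refine ⟨1, fun i => Nat.casesOn i S (fun _ => ⊤), one_pos, rfl, rfl, ?_, ?_, ?_⟩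
    · intro i hi
      interval_cases i
      exact hS
    · intro i hi
      interval_cases i
      intro Q h1 h2
      rw [← htop] at h2 ⊢
      exact hssA Q h1 h2
    · intro i hi
      interval_cases i
      intro B hB
      exact absurd hB not_top_lt
  · obtain ⟨n, C, hn, hC0, hCn, hinc, hss, hgood⟩ := ih A hSA hAtop
    refine ⟨n + 1, fun i => Nat.casesOn i S (fun j => C j), Nat.succ_pos n, rfl, hCn, ?_, ?_, ?_⟩
    · intro i hi
      cases i with
      | zero => show S < C 0; rw [hC0]; exact hSA
      | succ j => exact hinc j (Nat.lt_of_succ_lt_succ hi)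
    · intro i hi
      cases i with
      | zero =>
        intro Q h1 h2
        have h2' : Q < C 0 := h2
        show m (relz Z S Q) ≤ m (relz Z S (C 0))
        rw [hC0] at h2' ⊢
        exact hssA Q h1 h2'
      | succ j => exact hss j (Nat.lt_of_succ_lt_succ hi)
    · intro i hi
      cases i with
      | zero =>
        intro B hB
        have hB' : C 0 < B := hB
        show m (relz Z S B) < m (relz Z S (C 0))
        rw [hC0] at hB' ⊢
        exact hgoodA B hB'
      | succ j => exact hgood j (Nat.lt_of_succ_lt_succ hi)

end Chain

end HNAux

/-- Existence of Harder–Narasimhan filtrations for a weak stability function: if `𝒜` is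
noetherian and the image of the generalized rank is discrete in `ℝ`, then every nonzero
object `E` admits a finite chain of subobjects `0 = E₀ ⊊ E₁ ⊊ … ⊊ Eₙ = E` whose
subquotients are `Z`-semistable of strictly decreasing slopes. -/
theorem hn_filtration_exists_weak (Z : 𝒜 → ℂ) (hZ : IsWeakStabilityFunction Z)
    (hNoeth : NoetherianCategory 𝒜) (hDisc : HasDiscreteRank Z)
    (E : 𝒜) (hE : ¬ IsZero E) :
    ∃ (n : ℕ) (F : ℕ → Subobject E) (hF : ∀ i, i < n → F i < F (i + 1)),
      F 0 = ⊥ ∧ F n = ⊤ ∧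
      (∀ i (h : i < n), IsSemistableWeak Z (subquot (F i) (F (i + 1)) (hF i h).le)) ∧
      ∀ i (h : i + 1 < n),
        slopeE Z (subquot (F (i + 1)) (F (i + 2)) (hF (i + 1) h).le) <
          slopeE Z (subquot (F i) (F (i + 1)) (hF i (Nat.lt_of_succ_lt h)).le) := by
  classical
  obtain ⟨hadd, hwk⟩ := hZ
  have hPall : ∀ W : 𝒜, HNAux.Pc (Z W) := by
    intro W
    by_cases hW : IsZero W
    · rw [HNAux.Z_zero_of_isZero hadd hW]
      exact ⟨by simp, by simp⟩
    · exact ⟨(hwk W hW).1, (hwk W hW).2⟩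
  have wf : WellFounded ((· > ·) : Subobject E → Subobject E → Prop) :=
    (wellFoundedGT_iff_monotone_chain_condition.mpr fun a => by
      obtain ⟨N, hN⟩ := hNoeth E a
      exact ⟨N, fun m hm => (hN m hm).symm⟩).wf
  obtain ⟨O, hO⟩ := HasZeroObject.zero (C := 𝒜)
  obtain ⟨ε, hεpos, hεspec⟩ := hDisc 0 ⟨O, by
    simp [genR, HNAux.Z_zero_of_isZero hadd hO]⟩
  have hgap : ∀ X Y : Subobject E, X ≤ Y →
      (HNAux.relz Z X Y).im = 0 ∨ ε ≤ (HNAux.relz Z X Y).im := by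
    intro X Y hXY
    by_cases h0 : (HNAux.relz Z X Y).im = 0
    · exact Or.inl h0
    · right
      have hmem : (HNAux.relz Z X Y).im ∈ Set.range (genR Z) :=
        ⟨subquot X Y hXY, by rw [genR, HNAux.relz_eq hadd hXY]⟩
      have hpos : 0 ≤ (HNAux.relz Z X Y).im := (HNAux.Pc_relz hadd hPall hXY).1
      by_contra hlt
      push_neg at hlt
      exact h0 (hεspec _ hmem (by rw [sub_zero, abs_of_nonneg hpos]; exact hlt))
  have hbt : (⊥ : Subobject E) < ⊤ :=
    lt_of_le_of_ne bot_le (fun he => hE (HNAux.isZero_of_bot_eq_top he))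
  obtain ⟨n, C, hn, hC0, hCn, hinc, hss, hgood⟩ :=
    HNAux.exists_chain hadd hPall wf hεpos hgap ⊥ hbt
  have hslope : ∀ (X Y : Subobject E) (h : X ≤ Y),
      slopeE Z (subquot X Y h) = HNAux.m (HNAux.relz Z X Y) := by
    intro X Y h
    rw [show slopeE Z (subquot X Y h) = HNAux.m (Z (subquot X Y h)) from rfl,
      HNAux.relz_eq hadd h]
  refine ⟨n, C, fun i hi => hinc i hi, hC0, hCn, ?_, ?_⟩
  · intro i hi
    constructor
    · intro hz
      exact (hinc i hi).ne (HNAux.eq_of_isZero_subquot _ hz)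
    · intro F' f hm hnz hni
      obtain ⟨Q, hSQ, hQT, hZF, hz, hiso⟩ := HNAux.transfer hadd _ f hm
      have h1 : slopeE Z F' = HNAux.m (HNAux.relz Z (C i) Q) := by
        rw [show slopeE Z F' = HNAux.m (Z F') from rfl, hZF]; rfl
      rw [h1, hslope]
      exact hss i hi Q (lt_of_le_of_ne hSQ (fun he => hnz (hz he)))
        (lt_of_le_of_ne hQT (fun he => hni (hiso he)))
  · intro i hi
    rw [hslope, hslope]
    have h2 := hgood i (Nat.lt_of_succ_lt hi) (C (i + 2)) (hinc (i + 1) hi)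
    have hadd2 : HNAux.relz Z (C i) (C (i + 1)) + HNAux.relz Z (C (i + 1)) (C (i + 2)) =
        HNAux.relz Z (C i) (C (i + 2)) := HNAux.relz_add _ _ _
    rw [← hadd2] at h2
    exact HNAux.m_lt_of_m_add_lt (HNAux.Pc_relz hadd hPall (hinc i (Nat.lt_of_succ_lt hi)).le)
      (HNAux.Pc_relz hadd hPall (hinc (i + 1) hi).le) h2

end BridgelandNotes
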